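/- Let x_1,…,x_n ∈ ℝ^d be distinct, σ = (1/n) Σ_{i=1}^n δ_{x_i}, and let μ = (1/n) Σ_{j=1}^n δ_{y_j} with y_1,…,y_n ∈ ℝ^d distinct, and p ∈ [1,∞). Then there exists an optimal transport map T^μ : {x_1,…,x_n} → {y_1,…,y_n} with T^μ_*σ = μ and (1/n) Σ_{j=1}^n |x_j − T^μ(x_j)|_p^p = d_Wp^p(σ,μ); and defining the embedding [P(μ)]_j = (T^μ(x_j) − x_j) n^{−1/p} ∈ ℝ^d for j = 1,…,n, one has P(σ) = 0 (taking T^σ = Id) and |P(σ) − P(μ)|_p = d_Wp(σ,μ), where |·|_p is the Euclidean p-norm on (ℝ^d)^n. -/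

import Mathlib

open MeasureTheory Filter Topology

/-- `∑ i, |v i|^p`, the p-th power of the ℓ^p norm on ℝ^k. -/
noncomputable def lpPow (p : ℝ) {k : ℕ} (v : Fin k → ℝ) : ℝ := ∑ i, |v i| ^ p

/-- `π` is a coupling (transport plan) between `μ` and `ν`. -/
def IsCoupling {α β : Type*} [MeasurableSpace α] [MeasurableSpace β]
    (π : Measure (α × β)) (μ : Measure α) (ν : Measure β) : Prop :=
  π.map Prod.fst = μ ∧ π.map Prod.snd = ν

/-- The Kantorovich optimal transport cost for a cost function `c`. -/
noncomputable def OTCost {α β : Type*} [MeasurableSpace α] [MeasurableSpace β]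
    (c : α → β → ℝ) (μ : Measure α) (ν : Measure β) : ℝ :=
  ⨅ π : {π : Measure (α × β) // IsCoupling π μ ν},
    ∫ z, c z.1 z.2 ∂(π : Measure (α × β))

/-- The p-Wasserstein distance on ℝ^d with ℓ^p ground cost. -/
noncomputable def dWp (p : ℝ) {d : ℕ} (μ ν : Measure (Fin d → ℝ)) : ℝ :=
  (OTCost (fun x y => lpPow p (x - y)) μ ν) ^ (1 / p)

/-- The uniform discrete (empirical) measure `(1/n) ∑ᵢ δ_{x i}`. -/
noncomputable def uniformOn {d n : ℕ} (x : Fin n → (Fin d → ℝ)) : Measure (Fin d → ℝ) :=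
  (n : ENNReal)⁻¹ • ∑ i, Measure.dirac (x i)

/-- The linear embedding of a discrete measure via a transport map `T` (given by its
values on the support points): `[P(μ)]_j = (T(x_j) − x_j) n^{−1/p}`. -/
noncomputable def discEmbed (p : ℝ) {d n : ℕ} (x T : Fin n → (Fin d → ℝ)) :
    Fin n → (Fin d → ℝ) :=
  fun j => ((n : ℝ) ^ (-(1 / p))) • (T j - x j)

/-- The Euclidean ℓ^p norm of a block vector in `(ℝ^d)^n`. -/
noncomputable def blockNormP (p : ℝ) {d n : ℕ} (z : Fin n → (Fin d → ℝ)) : ℝ :=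
  (∑ j, lpPow p (z j)) ^ (1 / p)

lemma lpPow_nonneg (p : ℝ) {k : ℕ} (v : Fin k → ℝ) : 0 ≤ lpPow p v :=
  Finset.sum_nonneg fun i _ => Real.rpow_nonneg (abs_nonneg _) _

lemma lpPow_smul (p : ℝ) {k : ℕ} {a : ℝ} (ha : 0 ≤ a) (v : Fin k → ℝ) :
    lpPow p (a • v) = a ^ p * lpPow p v := by
  unfold lpPow
  rw [Finset.mul_sum]
  refine Finset.sum_congr rfl fun i _ => ?_
  simp only [Pi.smul_apply, smul_eq_mul, abs_mul, abs_of_nonneg ha]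
  rw [Real.mul_rpow ha (abs_nonneg _)]


lemma measure_eq_sum_dirac {α : Type*} [MeasurableSpace α] [MeasurableSingletonClass α]
    (μ : Measure α) (S : Finset α) (h : μ (↑S)ᶜ = 0) :
    μ = ∑ z ∈ S, μ {z} • Measure.dirac z := by
  classical
  ext A hA
  have hAS : μ A = μ (A ∩ ↑S) := by
    refine le_antisymm ?_ (measure_mono Set.inter_subset_left)
    calc μ A ≤ μ ((A ∩ ↑S) ∪ (↑S)ᶜ) := measure_mono (fun a ha => by
            by_cases hs : a ∈ (↑S : Set α)
            · exact Or.inl ⟨ha, hs⟩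
            · exact Or.inr hs)
      _ ≤ μ (A ∩ ↑S) + μ (↑S)ᶜ := measure_union_le _ _
      _ = μ (A ∩ ↑S) := by rw [h, add_zero]
  have hset : A ∩ ↑S = ⋃ z ∈ S.filter (· ∈ A), ({z} : Set α) := by
    ext a
    simp only [Set.mem_inter_iff, Set.mem_iUnion, Finset.mem_filter, Set.mem_singleton_iff]
    constructor
    · rintro ⟨ha, hs⟩; exact ⟨a, ⟨hs, ha⟩, rfl⟩
    · rintro ⟨z, ⟨hzS, hzA⟩, rfl⟩; exact ⟨hzA, hzS⟩
  rw [hAS, hset, measure_biUnion_finset ?_ (fun z _ => measurableSet_singleton z)]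
  · rw [Measure.finset_sum_apply, Finset.sum_filter]
    refine Finset.sum_congr rfl fun z hz => ?_
    rw [Measure.smul_apply, Measure.dirac_apply, smul_eq_mul]
    by_cases hza : z ∈ A <;> simp [hza, Set.indicator_apply]
  · intro z1 h1 z2 h2 hne
    simp only [Function.onFun, Set.disjoint_singleton_left, Set.mem_singleton_iff]
    exact hne


set_option maxHeartbeats 1000000 in
lemma otcost_eq {d : ℕ} (p : ℝ) (n : ℕ) (hn : 0 < n)
    (x y : Fin n → (Fin d → ℝ)) (hx : Function.Injective x) (hy : Function.Injective y) :
    ∃ σ0 : Equiv.Perm (Fin n),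
      OTCost (fun a b => lpPow p (a - b)) (uniformOn x) (uniformOn y)
        = (1 / (n : ℝ)) * ∑ i, lpPow p (x i - y (σ0 i)) := by
  classical
  set c : (Fin d → ℝ) → (Fin d → ℝ) → ℝ := fun a b => lpPow p (a - b) with hc
  set C : Fin n → Fin n → ℝ := fun i j => lpPow p (x i - y j) with hC
  have hC0 : ∀ i j, 0 ≤ C i j := fun i j => lpPow_nonneg _ _
  set f : Equiv.Perm (Fin n) → ℝ := fun σ => ∑ i, C i (σ i) with hf
  obtain ⟨σ0, -, hσ0⟩ := Finset.exists_min_image Finset.univ f ⟨1, Finset.mem_univ 1⟩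
  have hσ0' : ∀ σ, f σ0 ≤ f σ := fun σ => hσ0 σ (Finset.mem_univ σ)
  have hnE : (n : ENNReal) ≠ 0 := by exact_mod_cast hn.ne'
  have hnR : (n : ℝ) ≠ 0 := by exact_mod_cast hn.ne'
  -- singleton mass of uniformOn
  have hsingle : ∀ (z : Fin n → (Fin d → ℝ)) (hz : Function.Injective z) (i : Fin n),
      uniformOn z {z i} = (n : ENNReal)⁻¹ := by
    intro z hz i
    rw [uniformOn, Measure.smul_apply, Measure.finset_sum_apply]
    have : ∑ i' : Fin n, Measure.dirac (z i') {z i} = 1 := by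
      rw [Finset.sum_eq_single i]
      · simp [Measure.dirac_apply_of_mem]
      · intro b _ hb
        rw [Measure.dirac_apply]
        simp [Set.indicator_apply, hz.ne hb]
      · simp
    rw [this, smul_eq_mul, mul_one]
  have huniv : ∀ (z : Fin n → (Fin d → ℝ)), uniformOn z Set.univ = 1 := by
    intro z
    rw [uniformOn, Measure.smul_apply, Measure.finset_sum_apply]
    simp [ENNReal.inv_mul_cancel hnE (ENNReal.natCast_ne_top n)]
  -- the range-complement is null
  have hrangenull : ∀ (z : Fin n → (Fin d → ℝ)), uniformOn z (Set.range z)ᶜ = 0 := by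
    intro z
    rw [uniformOn, Measure.smul_apply, Measure.finset_sum_apply]
    have : ∀ i : Fin n, Measure.dirac (z i) (Set.range z)ᶜ = 0 := by
      intro i
      rw [Measure.dirac_apply]
      simp [Set.indicator_apply, Set.mem_range_self]
    simp [this]
  -- integrability wrt dirac
  have hint : ∀ z : ((Fin d → ℝ) × (Fin d → ℝ)), Integrable (fun w : ((Fin d → ℝ) × (Fin d → ℝ)) => c w.1 w.2) (Measure.dirac z) := by
    intro z
    have h1 := ae_eq_dirac (a := z) (fun w : ((Fin d → ℝ) × (Fin d → ℝ)) => c w.1 w.2)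
    have h2 : Integrable (fun _ : ((Fin d → ℝ) × (Fin d → ℝ)) => c z.1 z.2) (Measure.dirac z) := integrable_const _
    exact h2.congr h1.symm
  -- the candidate coupling
  set π0 : Measure (((Fin d → ℝ) × (Fin d → ℝ))) :=
    (n : ENNReal)⁻¹ • ∑ i, Measure.dirac (x i, y (σ0 i)) with hπ0
  have hπ0coup : IsCoupling π0 (uniformOn x) (uniformOn y) := by
    constructor
    · ext s hs
      rw [Measure.map_apply measurable_fst hs, hπ0, Measure.smul_apply,
        Measure.finset_sum_apply, uniformOn, Measure.smul_apply, Measure.finset_sum_apply]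
      congr 1
      refine Finset.sum_congr rfl fun i _ => ?_
      rw [Measure.dirac_apply, Measure.dirac_apply]
      simp [Set.indicator_apply, Set.mem_preimage]
    · ext s hs
      rw [Measure.map_apply measurable_snd hs, hπ0, Measure.smul_apply,
        Measure.finset_sum_apply, uniformOn, Measure.smul_apply, Measure.finset_sum_apply]
      congr 1
      rw [← Equiv.sum_comp σ0 (fun j => Measure.dirac (y j) s)]
      refine Finset.sum_congr rfl fun i _ => ?_
      rw [Measure.dirac_apply, Measure.dirac_apply]
      simp [Set.indicator_apply, Set.mem_preimage]
  have hπ0int : ∫ z, c z.1 z.2 ∂π0 = (1 / (n : ℝ)) * f σ0 := by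
    rw [hπ0, integral_smul_measure,
      integral_finset_sum_measure (fun i _ => hint _)]
    simp only [integral_dirac]
    rw [ENNReal.toReal_inv]
    simp [smul_eq_mul, one_div, hf, hC, hc]
  have hbdd : BddBelow (Set.range fun π : {π : Measure (((Fin d → ℝ) × (Fin d → ℝ))) // IsCoupling π (uniformOn x) (uniformOn y)} =>
      ∫ z, c z.1 z.2 ∂(π : Measure (((Fin d → ℝ) × (Fin d → ℝ))))) := by
    refine ⟨0, ?_⟩
    rintro r ⟨π, rfl⟩
    exact integral_nonneg fun z => lpPow_nonneg _ _
  haveI : Nonempty {π : Measure (((Fin d → ℝ) × (Fin d → ℝ))) // IsCoupling π (uniformOn x) (uniformOn y)} :=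
    ⟨⟨π0, hπ0coup⟩⟩
  refine ⟨σ0, le_antisymm ?_ ?_⟩
  · calc OTCost c (uniformOn x) (uniformOn y)
        ≤ ∫ z, c z.1 z.2 ∂π0 := ciInf_le hbdd ⟨π0, hπ0coup⟩
      _ = _ := hπ0int
  · refine le_ciInf ?_
    rintro ⟨π, hπ1, hπ2⟩
    show (1 / (n:ℝ)) * ∑ i, lpPow p (x i - y (σ0 i)) ≤ ∫ z, c z.1 z.2 ∂π
    have hπuniv : π Set.univ = 1 := by
      have h := congrArg (fun μ : Measure (Fin d → ℝ) => μ Set.univ) hπ1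
      simpa [Measure.map_apply measurable_fst MeasurableSet.univ, huniv x] using h
    haveI : IsProbabilityMeasure π := ⟨hπuniv⟩
    set e : Fin n × Fin n → ((Fin d → ℝ) × (Fin d → ℝ)) := fun ij => (x ij.1, y ij.2) with he
    have heinj : Function.Injective e := by
      rintro ⟨i1, j1⟩ ⟨i2, j2⟩ h
      rw [Prod.ext_iff] at h
      obtain ⟨h1, h2⟩ := h
      simp only [he] at h1 h2
      exact Prod.ext (hx h1) (hy h2)
    set S : Finset ((Fin d → ℝ) × (Fin d → ℝ)) := Finset.image e Finset.univ with hS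
    have hScompl : π (↑S)ᶜ = 0 := by
      have hsub : (↑S : Set ((Fin d → ℝ) × (Fin d → ℝ)))ᶜ ⊆
          Prod.fst ⁻¹' (Set.range x)ᶜ ∪ Prod.snd ⁻¹' (Set.range y)ᶜ := by
        intro z hz
        rw [Set.mem_union]
        by_contra hcon
        push_neg at hcon
        obtain ⟨h1, h2⟩ := hcon
        simp only [Set.mem_preimage, Set.mem_compl_iff, not_not] at h1 h2
        obtain ⟨i, hi⟩ := h1
        obtain ⟨j, hj⟩ := h2
        refine hz ?_
        simp only [hS, Finset.coe_image, Set.mem_image, Finset.coe_univ]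
        exact ⟨(i, j), Set.mem_univ _, Prod.ext (by simpa [he] using hi) (by simpa [he] using hj)⟩
      have h1 : π (Prod.fst ⁻¹' (Set.range x)ᶜ) = 0 := by
        rw [← Measure.map_apply measurable_fst (Set.finite_range x).measurableSet.compl, hπ1]
        exact hrangenull x
      have h2 : π (Prod.snd ⁻¹' (Set.range y)ᶜ) = 0 := by
        rw [← Measure.map_apply measurable_snd (Set.finite_range y).measurableSet.compl, hπ2]
        exact hrangenull y
      refine le_antisymm ?_ zero_le
      calc π (↑S)ᶜ ≤ π (Prod.fst ⁻¹' (Set.range x)ᶜ ∪ Prod.snd ⁻¹' (Set.range y)ᶜ) :=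
            measure_mono hsub
        _ ≤ π (Prod.fst ⁻¹' (Set.range x)ᶜ) + π (Prod.snd ⁻¹' (Set.range y)ᶜ) :=
            measure_union_le _ _
        _ = 0 := by rw [h1, h2, add_zero]
    have hdec := measure_eq_sum_dirac π S hScompl
    set m : Fin n → Fin n → ENNReal := fun i j => π {(x i, y j)} with hm
    have hmtop : ∀ i j, m i j ≠ ⊤ := fun i j => measure_ne_top π _
    -- row sums
    have hrow : ∀ i, ∑ j, m i j = (n : ENNReal)⁻¹ := by
      intro i
      have h1 : π (Prod.fst ⁻¹' {x i}) = (n : ENNReal)⁻¹ := by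
        rw [← Measure.map_apply measurable_fst (measurableSet_singleton _), hπ1]
        exact hsingle x hx i
      have h3 : π (Prod.fst ⁻¹' {x i}) = (∑ z ∈ S, π {z} • Measure.dirac z) (Prod.fst ⁻¹' {x i}) := by
        conv_lhs => rw [hdec]
      have h2 : (∑ z ∈ S, π {z} • Measure.dirac z) (Prod.fst ⁻¹' {x i}) = ∑ j, m i j := by
        rw [Measure.finset_sum_apply, hS, Finset.sum_image (fun a _ b _ h => heinj h),
          Fintype.sum_prod_type]
        have hterm : ∀ i' j, (π {e (i', j)} • Measure.dirac (e (i', j))) (Prod.fst ⁻¹' {x i})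
            = if i' = i then m i' j else 0 := by
          intro i' j
          rw [Measure.smul_apply, Measure.dirac_apply, smul_eq_mul]
          by_cases hii : i' = i
          · subst hii; simp [he, Set.indicator_apply, hm]
          · simp [he, Set.indicator_apply, hx.ne hii, hii, hm]
        simp_rw [hterm]
        rw [Finset.sum_comm]
        refine Finset.sum_congr rfl fun j _ => ?_
        rw [Finset.sum_ite_eq' Finset.univ i (fun i' => m i' j)]
        simp
      rw [← h2, ← h3, h1]
    -- column sums
    have hcol : ∀ j, ∑ i, m i j = (n : ENNReal)⁻¹ := by
      intro j
      have h1 : π (Prod.snd ⁻¹' {y j}) = (n : ENNReal)⁻¹ := by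
        rw [← Measure.map_apply measurable_snd (measurableSet_singleton _), hπ2]
        exact hsingle y hy j
      have h3 : π (Prod.snd ⁻¹' {y j}) = (∑ z ∈ S, π {z} • Measure.dirac z) (Prod.snd ⁻¹' {y j}) := by
        conv_lhs => rw [hdec]
      have h2 : (∑ z ∈ S, π {z} • Measure.dirac z) (Prod.snd ⁻¹' {y j}) = ∑ i', m i' j := by
        rw [Measure.finset_sum_apply, hS, Finset.sum_image (fun a _ b _ h => heinj h),
          Fintype.sum_prod_type]
        have hterm : ∀ i' j', (π {e (i', j')} • Measure.dirac (e (i', j'))) (Prod.snd ⁻¹' {y j})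
            = if j' = j then m i' j' else 0 := by
          intro i' j'
          rw [Measure.smul_apply, Measure.dirac_apply, smul_eq_mul]
          by_cases hjj : j' = j
          · subst hjj; simp [he, Set.indicator_apply, hm]
          · simp [he, Set.indicator_apply, hy.ne hjj, hjj, hm]
        simp_rw [hterm]
        refine Finset.sum_congr rfl fun i' _ => ?_
        rw [Finset.sum_ite_eq' Finset.univ j (fun j' => m i' j')]
        simp
      rw [← h2, ← h3, h1]
    -- integral
    have hiπ : ∫ z, c z.1 z.2 ∂π = ∑ ij : Fin n × Fin n, (m ij.1 ij.2).toReal * C ij.1 ij.2 := by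
      conv_lhs => rw [hdec]
      rw [integral_finset_sum_measure (fun z _ => (hint z).smul_measure (measure_ne_top π _))]
      simp only [integral_smul_measure, smul_eq_mul, integral_dirac]
      rw [hS, Finset.sum_image (fun a _ b _ h => heinj h)]
    -- the doubly stochastic matrix
    set M : Matrix (Fin n) (Fin n) ℝ := Matrix.of (fun i j => (n : ℝ) * (m i j).toReal) with hM
    have hMds : M ∈ doublyStochastic ℝ (Fin n) := by
      rw [mem_doublyStochastic_iff_sum]
      refine ⟨fun i j => mul_nonneg (Nat.cast_nonneg n) ENNReal.toReal_nonneg, ?_, ?_⟩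
      · intro i
        have h4 : ∑ j, (m i j).toReal = ((n : ENNReal)⁻¹).toReal := by
          rw [← ENNReal.toReal_sum (fun j _ => hmtop i j), hrow i]
        simp only [hM, Matrix.of_apply, ← Finset.mul_sum, h4, ENNReal.toReal_inv,
          ENNReal.toReal_natCast]
        exact mul_inv_cancel₀ hnR
      · intro j
        have h4 : ∑ i, (m i j).toReal = ((n : ENNReal)⁻¹).toReal := by
          rw [← ENNReal.toReal_sum (fun i _ => hmtop i j), hcol j]
        simp only [hM, Matrix.of_apply, ← Finset.mul_sum, h4, ENNReal.toReal_inv,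
          ENNReal.toReal_natCast]
        exact mul_inv_cancel₀ hnR
    obtain ⟨w, hw0, hw1, hwM⟩ := exists_eq_sum_perm_of_mem_doublyStochastic hMds
    have hMentry : ∀ i j, M i j = ∑ σ : Equiv.Perm (Fin n), w σ * (if σ i = j then 1 else 0) := by
      intro i j
      rw [← hwM, Matrix.sum_apply]
      refine Finset.sum_congr rfl fun σ _ => ?_
      rw [Matrix.smul_apply, smul_eq_mul]
      congr 1
      by_cases h : σ i = j <;>
        simp [Equiv.Perm.permMatrix, PEquiv.toMatrix_apply, Equiv.toPEquiv_apply, h]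
    have hkey : (1 / (n:ℝ)) * ∑ σ, w σ * f σ
        = ∑ ij : Fin n × Fin n, (m ij.1 ij.2).toReal * C ij.1 ij.2 := by
      have h1 : ∀ ij : Fin n × Fin n, (m ij.1 ij.2).toReal * C ij.1 ij.2
          = (1 / (n:ℝ)) * (M ij.1 ij.2 * C ij.1 ij.2) := by
        intro ij
        simp only [hM, Matrix.of_apply]
        field_simp
      rw [Finset.sum_congr rfl (fun ij _ => h1 ij), ← Finset.mul_sum]
      congr 1
      rw [Fintype.sum_prod_type]
      have h2 : ∀ i j, M i j * C i j
          = ∑ σ : Equiv.Perm (Fin n), w σ * (if σ i = j then C i j else 0) := by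
        intro i j
        rw [hMentry i j, Finset.sum_mul]
        refine Finset.sum_congr rfl fun σ _ => ?_
        by_cases h : σ i = j <;> simp [h]
      simp_rw [h2]
      have h5 : ∀ i : Fin n, (∑ j, ∑ σ : Equiv.Perm (Fin n), w σ * (if σ i = j then C i j else 0))
          = ∑ σ : Equiv.Perm (Fin n), w σ * C i (σ i) := by
        intro i
        rw [Finset.sum_comm]
        refine Finset.sum_congr rfl fun σ _ => ?_
        rw [← Finset.mul_sum, Finset.sum_ite_eq Finset.univ (σ i) (fun j => C i j)]
        simp
      simp_rw [h5]
      rw [Finset.sum_comm]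
      refine Finset.sum_congr rfl fun σ _ => ?_
      rw [hf, Finset.mul_sum]
    have hlow : f σ0 ≤ ∑ σ, w σ * f σ := by
      calc f σ0 = ∑ σ, w σ * f σ0 := by rw [← Finset.sum_mul, hw1, one_mul]
        _ ≤ ∑ σ, w σ * f σ :=
          Finset.sum_le_sum fun σ _ => mul_le_mul_of_nonneg_left (hσ0' σ) (hw0 σ)
    calc (1 / (n:ℝ)) * ∑ i, lpPow p (x i - y (σ0 i)) = (1 / (n:ℝ)) * f σ0 := rfl
      _ ≤ (1 / (n:ℝ)) * ∑ σ, w σ * f σ := by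
          refine mul_le_mul_of_nonneg_left hlow ?_
          positivity
      _ = ∑ ij : Fin n × Fin n, (m ij.1 ij.2).toReal * C ij.1 ij.2 := hkey
      _ = ∫ z, c z.1 z.2 ∂π := hiπ.symm


/-- for uniform discrete measures on `n` distinct points an optimal
transport map (a permutation) exists, and the linear Wasserstein embedding
`[P(μ)]_j = (T^μ(x_j) − x_j) n^{−1/p}` satisfies `P(σ) = 0` and
`|P(σ) − P(μ)|_p = d_Wp(σ,μ)`. -/
theorem linear_wasserstein_discrete {d : ℕ} (p : ℝ) (hp1 : 1 ≤ p)
    (n : ℕ) (hn : 0 < n) (x y : Fin n → (Fin d → ℝ))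
    (hx : Function.Injective x) (hy : Function.Injective y) :
    ∃ σperm : Equiv.Perm (Fin n),
      uniformOn (fun j => y (σperm j)) = uniformOn y ∧
      (1 / (n : ℝ)) * ∑ j, lpPow p (x j - y (σperm j))
        = dWp p (uniformOn x) (uniformOn y) ^ p ∧
      discEmbed p x x = 0 ∧
      blockNormP p (discEmbed p x x - discEmbed p x (fun j => y (σperm j)))
        = dWp p (uniformOn x) (uniformOn y) := by
  obtain ⟨σ0, hcost⟩ := otcost_eq p n hn x y hx hy
  have hp0 : (0:ℝ) < p := lt_of_lt_of_le one_pos hp1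
  have hpne : p ≠ 0 := hp0.ne'
  set v : ℝ := (1 / (n:ℝ)) * ∑ i, lpPow p (x i - y (σ0 i)) with hv
  have hv0 : 0 ≤ v :=
    mul_nonneg (by positivity) (Finset.sum_nonneg fun i _ => lpPow_nonneg _ _)
  have hdW : dWp p (uniformOn x) (uniformOn y) = v ^ (1/p) := by
    rw [dWp, hcost]
  have hdWp : dWp p (uniformOn x) (uniformOn y) ^ p = v := by
    rw [hdW, ← Real.rpow_mul hv0, one_div_mul_cancel hpne, Real.rpow_one]
  refine ⟨σ0, ?_, ?_, ?_, ?_⟩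
  · unfold uniformOn
    congr 1
    exact Equiv.sum_comp σ0 (fun j => Measure.dirac (y j))
  · rw [hdWp]
  · funext j
    simp [discEmbed]
  · have hc0 : (0:ℝ) ≤ (n : ℝ) ^ (-(1/p)) := Real.rpow_nonneg (Nat.cast_nonneg n) _
    have hz : (discEmbed p x x - discEmbed p x (fun j => y (σ0 j)))
        = fun j => ((n:ℝ) ^ (-(1/p))) • (x j - y (σ0 j)) := by
      funext j
      simp only [Pi.sub_apply, discEmbed]
      rw [sub_self, smul_zero, zero_sub, ← smul_neg, neg_sub]
    rw [blockNormP, hz]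
    have hsum : ∑ j, lpPow p (((n:ℝ) ^ (-(1/p))) • (x j - y (σ0 j))) = v := by
      have hcp : ((n:ℝ) ^ (-(1/p))) ^ p = 1 / (n:ℝ) := by
        rw [← Real.rpow_mul (Nat.cast_nonneg n)]
        rw [neg_mul, one_div_mul_cancel hpne, Real.rpow_neg_one, one_div]
      simp only [lpPow_smul p hc0, hcp, ← Finset.mul_sum, hv]
    rw [hsum, ← hdW]
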